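/- arXiv:1408.5495 — 2 statements merged into one kernel-verified Lean document; each statement's English description precedes it below -/
import Mathlib

section
/- For every m ≥ 1 and i ∈ {1,2}, the envelope word E_{m+1,i} equals σ(E_{m,i}) followed by the single letter a, i.e., E_{m+1,i} = σ(E_{m,i})·a. -/
namespace PD

/-- The period-doubling substitution on the alphabet `Bool`,
where `false` stands for the letter `a` and `true` for the letter `b`:
`σ(a) = ab`, `σ(b) = aa`. -/
def sub : Bool → List Bool
  | false => [false, true]
  | true  => [false, false]

/-- The substitution applied to a finite word. -/
def subW (w : List Bool) : List Bool := w.flatMap sub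

/-- `A m = σ^m(a)`. -/
def A (m : ℕ) : List Bool := subW^[m] [false]

/-- `B m = σ^m(b)`. -/
def B (m : ℕ) : List Bool := subW^[m] [true]

/-- The doubling sequence `D∞` (0-indexed: `D n` is the `(n+1)`-th letter),
the fixed point of `σ` beginning with `a`; `A m` is a prefix of `A (m+1)`,
and `A (n+1)` has length `2^(n+1) > n`. -/
def D (n : ℕ) : Bool := (A (n + 1)).getD n false

/-- `δ m`, the last letter of `A m`. -/
def delta (m : ℕ) : Bool := (A m).getLastD false

/-- The envelope words (`i ∈ {1,2}`): `E m 1 = A m` minus its last letter,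
`E m 2 = A (m-1) ++ (A m` minus its last letter `)`. -/
def E (m i : ℕ) : List Bool :=
  if i = 1 then (A m).dropLast else A (m - 1) ++ (A m).dropLast

/-- `w` occurs at the (1-indexed) position `j` in the finite word `τ`. -/
def OccursIn (w τ : List Bool) (j : ℕ) : Prop :=
  1 ≤ j ∧ (τ.drop (j - 1)).take w.length = w

/-- `w` occurs at the (1-indexed) position `j` in the doubling sequence. -/
def OccursD (w : List Bool) (j : ℕ) : Prop :=
  1 ≤ j ∧ ∀ k < w.length, D (j - 1 + k) = w.getD k false

/-- `w` is a factor of the doubling sequence. -/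
def FactorD (w : List Bool) : Prop := ∃ j, OccursD w j

/-- `L w p`: the (1-indexed) starting position of the `p`-th occurrence of `w`
in the doubling sequence, occurrences being ordered by starting position.
(Each factor occurs infinitely often, so `Nat.nth` enumerates all occurrences
in increasing order.) -/
noncomputable def L (w : List Bool) (p : ℕ) : ℕ := Nat.nth (OccursD w) (p - 1)

/-- The strict total order on envelope words:
`E m₁ i₁ ⊏ E m₂ i₂` iff `m₁ < m₂`, or `m₁ = m₂` and `i₁ < i₂`. -/
def EnvLt (m₁ i₁ m₂ i₂ : ℕ) : Prop := m₁ < m₂ ∨ (m₁ = m₂ ∧ i₁ < i₂)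

/-- `Env(w) = E m i`: the envelope word `E m i` is the `⊏`-minimal envelope
word containing `w` as a factor. -/
def IsEnv (w : List Bool) (m i : ℕ) : Prop :=
  1 ≤ m ∧ (i = 1 ∨ i = 2) ∧ w <:+: E m i ∧
    ∀ m' i', 1 ≤ m' → (i' = 1 ∨ i' = 2) → EnvLt m' i' m i → ¬ w <:+: E m' i'

/-- The substitution `φ₁(a) = a`, `φ₁(b) = bb`. -/
def phi1 : Bool → List Bool
  | false => [false]
  | true  => [true, true]

/-- `Θ₁ = φ₁(D∞)` (0-indexed): `φ₁(A (n+1))` is a prefix of `Θ₁` of length `> n`. -/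
def Theta1 (n : ℕ) : Bool := ((A (n + 1)).flatMap phi1).getD n false

/-- The substitution `φ₂(a) = ab`, `φ₂(b) = acac`, over the alphabet `Fin 3`
where `0` stands for `a`, `1` for `b` and `2` for `c`. -/
def phi2 : Bool → List (Fin 3)
  | false => [0, 1]
  | true  => [0, 2, 0, 2]

/-- `Θ₂ = φ₂(D∞)` (0-indexed). -/
def Theta2 (n : ℕ) : Fin 3 := ((A (n + 1)).flatMap phi2).getD n 0

/-- `N₁(x,p)`: the number of letters `x` among the first `p` letters of `Θ₁`. -/
def N1 (x : Bool) (p : ℕ) : ℕ := ((List.range p).map Theta1).count x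

/-- `N₂(x,p)`: the number of letters `x` among the first `p` letters of `Θ₂`. -/
def N2 (x : Fin 3) (p : ℕ) : ℕ := ((List.range p).map Theta2).count x

end PD

open PD

lemma PD.A_succ (m : ℕ) : A (m + 1) = subW (A m) := by
  simp [A, Function.iterate_succ_apply']

lemma PD.subW_append (u v : List Bool) : subW (u ++ v) = subW u ++ subW v := by
  simp [subW]

lemma PD.A_ne_nil (m : ℕ) : A m ≠ [] := by
  induction m with
  | zero => simp [A]
  | succ n ih =>
    rw [PD.A_succ]
    obtain ⟨c, t, h⟩ := List.exists_cons_of_ne_nil ih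
    rw [h]
    cases c <;> simp [subW, sub]

lemma PD.subW_dropLast (w : List Bool) (hw : w ≠ []) :
    (subW w).dropLast = subW w.dropLast ++ [false] := by
  conv_lhs => rw [← w.dropLast_append_getLast hw]
  rw [PD.subW_append]
  cases w.getLast hw <;>
    simp [subW, sub, List.dropLast_append_cons]

/-- For every `m ≥ 1` and `i ∈ {1,2}`, `E (m+1) i = σ(E m i)·a`. -/
theorem doubling_envelope_subst (m : ℕ) (hm : 1 ≤ m) (i : ℕ) (hi : i = 1 ∨ i = 2) :
    E (m + 1) i = subW (E m i) ++ [false] := by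
  rcases hi with rfl | rfl
  · simp only [E, if_pos rfl, PD.A_succ]
    exact PD.subW_dropLast (A m) (PD.A_ne_nil m)
  · simp only [E, if_neg (by norm_num : (2:ℕ) ≠ 1), Nat.add_sub_cancel, PD.subW_append]
    rw [List.append_assoc, ← PD.subW_dropLast (A m) (PD.A_ne_nil m), ← PD.A_succ,
      ← PD.A_succ, Nat.sub_add_cancel hm]
end

section
/- For every m ≥ 1: (1) E_{m,1} occurs in E_{m+1,1} at exactly two positions, 1 and 2^m+1; (2) E_{m,1} occurs in E_{m,2} at exactly two positions, 1 and 2^{m−1}+1; (3) E_{m,2} occurs in E_{m+2,1} at exactly two positions, 2^m+1 and 3·2^{m−1}+1; (4) E_{m,2} occurs in E_{m+2,2} at exactly four positions, 2^m+1, 3·2^{m−1}+1, 3·2^m+1 and 7·2^{m−1}+1. -/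
open PD

namespace PD

instance (w τ : List Bool) (j : ℕ) : Decidable (OccursIn w τ j) := by
  unfold OccursIn; infer_instance

/-- `P m = A m` minus its last letter. -/
def P (m : ℕ) : List Bool := (A m).dropLast

/-- `Sa u = σ(u) ++ [a]`. -/
def Sa (u : List Bool) : List Bool := subW u ++ [false]

lemma sub_eq (x : Bool) : sub x = [false, !x] := by cases x <;> rfl

lemma subW_cons (x : Bool) (u : List Bool) : subW (x :: u) = false :: (!x) :: subW u := by
  simp [subW, sub_eq]

lemma subW_length (u : List Bool) : (subW u).length = 2 * u.length := by
  induction u with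
  | nil => rfl
  | cons x u ih => rw [subW_cons]; simp [ih]; omega

lemma subW_append_s7 (u v : List Bool) : subW (u ++ v) = subW u ++ subW v :=
  List.flatMap_append

lemma A_succ_s7 (m : ℕ) : A (m + 1) = subW (A m) := Function.iterate_succ_apply' _ _ _

lemma A_length (m : ℕ) : (A m).length = 2 ^ m := by
  induction m with
  | zero => rfl
  | succ m ih => rw [A_succ_s7, subW_length, ih, pow_succ]; ring

lemma A_ne_nil_s7 (m : ℕ) : A m ≠ [] := by
  intro h
  have h1 := A_length m
  rw [h] at h1
  have h2 : (2:ℕ) ^ m ≠ 0 := pow_ne_zero m (by norm_num)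
  simp at h1
  omega

lemma Sa_nil : Sa [] = [false] := rfl

lemma Sa_cons (x : Bool) (u : List Bool) : Sa (x :: u) = false :: (!x) :: Sa u := by
  unfold Sa; rw [subW_cons]; rfl

lemma Sa_length (u : List Bool) : (Sa u).length = 2 * u.length + 1 := by
  unfold Sa; simp [subW_length]

lemma dropLast_subW (w : List Bool) (hw : w ≠ []) :
    (subW w).dropLast = Sa w.dropLast := by
  induction w using List.reverseRecOn with
  | nil => exact absurd rfl hw
  | append_singleton w x _ =>
    rw [subW_append_s7, List.dropLast_concat]
    have hx : subW [x] = [false, !x] := by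
      rw [show subW [x] = sub x by simp [subW], sub_eq]
    rw [hx, show (subW w ++ [false, !x]) = (subW w ++ [false]) ++ [!x] by simp,
      List.dropLast_concat]
    rfl

lemma P_succ (m : ℕ) : P (m + 1) = Sa (P m) := by
  unfold P; rw [A_succ_s7, dropLast_subW _ (A_ne_nil_s7 m)]

lemma E_one (m : ℕ) : E m 1 = P m := if_pos rfl

lemma E_two (m : ℕ) : E (m + 1) 2 = A m ++ P (m + 1) := by
  unfold E P; norm_num

lemma E_two_succ (m : ℕ) : E (m + 2) 2 = Sa (E (m + 1) 2) := by
  rw [E_two, E_two, show m + 2 = (m + 1) + 1 from rfl, P_succ, A_succ_s7]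
  unfold Sa
  rw [subW_append_s7, List.append_assoc]

lemma false_mem_P (m : ℕ) : false ∈ P (m + 1) := by
  rw [P_succ]; unfold Sa; simp

lemma false_mem_E (m : ℕ) : false ∈ E (m + 1) 2 := by
  rw [E_two]; exact List.mem_append_right _ (false_mem_P m)

lemma Sa_getD_even (u : List Bool) (q : ℕ) : (Sa u).getD (2 * q) false = false := by
  induction u generalizing q with
  | nil =>
    cases q with
    | zero => rfl
    | succ q => rw [show 2 * (q + 1) = 2 * q + 1 + 1 by ring]; rfl
  | cons x u ih =>
    rw [Sa_cons]
    cases q with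
    | zero => rfl
    | succ q =>
      rw [show 2 * (q + 1) = 2 * q + 1 + 1 by ring, List.getD_cons_succ, List.getD_cons_succ]
      exact ih q

lemma Sa_getD_odd (u : List Bool) (q : ℕ) (h : q < u.length) :
    (Sa u).getD (2 * q + 1) false = !(u.getD q false) := by
  induction u generalizing q with
  | nil => simp at h
  | cons x u ih =>
    rw [Sa_cons]
    cases q with
    | zero => rfl
    | succ q =>
      rw [show 2 * (q + 1) + 1 = 2 * q + 1 + 1 + 1 by ring, List.getD_cons_succ,
        List.getD_cons_succ, List.getD_cons_succ]
      exact ih q (by simpa using Nat.lt_of_succ_lt_succ h)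

lemma occ_le {w τ : List Bool} {j : ℕ} (hw : w ≠ []) (h : OccursIn w τ j) :
    j ≤ τ.length := by
  by_contra hj
  push_neg at hj
  have hd : τ.drop (j - 1) = [] := List.drop_eq_nil_of_le (by omega)
  have h2 := h.2
  rw [hd, List.take_nil] at h2
  exact hw h2.symm

lemma occursIn_iff {w τ : List Bool} (hw : w ≠ []) {j : ℕ} :
    OccursIn w τ j ↔ 1 ≤ j ∧ j - 1 + w.length ≤ τ.length ∧
      ∀ k < w.length, τ.getD (j - 1 + k) false = w.getD k false := by
  have hwpos : 0 < w.length := List.length_pos_iff.mpr hw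
  unfold OccursIn
  constructor
  · rintro ⟨h1, h2⟩
    have hlen : j - 1 + w.length ≤ τ.length := by
      have hl := congrArg List.length h2
      simp only [List.length_take, List.length_drop] at hl
      omega
    refine ⟨h1, hlen, fun k hk => ?_⟩
    have hk2 : j - 1 + k < τ.length := by omega
    have hk3 : k < ((τ.drop (j - 1)).take w.length).length := by
      simp only [List.length_take, List.length_drop]; omega
    calc τ.getD (j - 1 + k) false = τ[j - 1 + k] := List.getD_eq_getElem _ _ hk2
      _ = ((τ.drop (j - 1)).take w.length)[k] := by
          rw [List.getElem_take, List.getElem_drop]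
      _ = w[k]'hk := by exact List.getElem_of_eq h2 _
      _ = w.getD k false := (List.getD_eq_getElem _ _ hk).symm
  · rintro ⟨h1, h2, h3⟩
    refine ⟨h1, ?_⟩
    apply List.ext_getElem
    · simp only [List.length_take, List.length_drop]; omega
    · intro i hi hwi
      calc ((τ.drop (j - 1)).take w.length)[i] = τ[j - 1 + i] := by
            rw [List.getElem_take, List.getElem_drop]
        _ = τ.getD (j - 1 + i) false := (List.getD_eq_getElem _ _ (by omega)).symm
        _ = w.getD i false := h3 i hwi
        _ = w[i] := List.getD_eq_getElem _ _ hwi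

lemma master (u ρ : List Bool) (hu : false ∈ u) (j : ℕ) :
    OccursIn (Sa u) (Sa ρ) j ↔ ∃ t, OccursIn u ρ t ∧ j = 2 * t - 1 := by
  have hune : u ≠ [] := by rintro rfl; simp at hu
  have hSane : Sa u ≠ [] := by
    intro h; have := congrArg List.length h; rw [Sa_length] at this; simp at this
  rw [occursIn_iff hSane, Sa_length, Sa_length]
  constructor
  · rintro ⟨h1, h2, h3⟩
    -- j is odd
    obtain ⟨q, hq, hval⟩ := List.mem_iff_getElem.mp hu
    have hqD : u.getD q false = false := by rw [List.getD_eq_getElem _ _ hq, hval]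
    have htrue : (Sa ρ).getD (j - 1 + (2 * q + 1)) false = true := by
      rw [h3 (2 * q + 1) (by omega), Sa_getD_odd u q hq, hqD]; rfl
    have hodd : Odd j := by
      by_contra hev
      rw [Nat.not_odd_iff_even] at hev
      obtain ⟨s, hs⟩ := hev
      have : j - 1 + (2 * q + 1) = 2 * (s + q) := by omega
      rw [this, Sa_getD_even] at htrue
      exact Bool.false_ne_true htrue
    obtain ⟨s, hs⟩ := hodd
    refine ⟨s + 1, ?_, by omega⟩
    rw [occursIn_iff hune]
    have hsr : s + u.length ≤ ρ.length := by omega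
    refine ⟨by omega, by omega, fun q' hq' => ?_⟩
    have := h3 (2 * q' + 1) (by omega)
    rw [show j - 1 + (2 * q' + 1) = 2 * (s + q') + 1 by omega,
      Sa_getD_odd ρ (s + q') (by omega), Sa_getD_odd u q' hq'] at this
    have := Bool.not_inj this
    rw [show s + 1 - 1 + q' = s + q' by omega, this]
  · rintro ⟨t, ht, rfl⟩
    rw [occursIn_iff hune] at ht
    obtain ⟨ht1, ht2, ht3⟩ := ht
    obtain ⟨s, rfl⟩ : ∃ s, t = s + 1 := ⟨t - 1, by omega⟩
    rw [show s + 1 - 1 + u.length ≤ ρ.length ↔ s + u.length ≤ ρ.length by omega] at ht2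
    refine ⟨by omega, by omega, fun k hk => ?_⟩
    rcases Nat.even_or_odd k with ⟨q, hq⟩ | ⟨q, hq⟩
    · rw [show 2 * (s + 1) - 1 - 1 + k = 2 * (s + q) by omega,
        show k = 2 * q by omega, Sa_getD_even, Sa_getD_even]
    · have hqn : q < u.length := by omega
      rw [show 2 * (s + 1) - 1 - 1 + k = 2 * (s + q) + 1 by omega,
        show k = 2 * q + 1 from hq, Sa_getD_odd ρ (s + q) (by omega),
        Sa_getD_odd u q hqn]
      have := ht3 q hqn
      rw [show s + 1 - 1 + q = s + q by omega] at this
      rw [this]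

lemma master_set (u ρ : List Bool) (hu : false ∈ u) :
    {j | OccursIn (Sa u) (Sa ρ) j} = (fun t => 2 * t - 1) '' {t | OccursIn u ρ t} := by
  ext j
  simp only [Set.mem_setOf_eq, Set.mem_image, master u ρ hu]
  constructor
  · rintro ⟨t, ht, rfl⟩; exact ⟨t, ht, rfl⟩
  · rintro ⟨t, ht, rfl⟩; exact ⟨t, ht, rfl⟩

lemma claim1 (k : ℕ) : {j | OccursIn (P (k + 1)) (P (k + 2)) j} = {1, 2 ^ (k + 1) + 1} := by
  induction k with
  | zero =>
    ext j
    simp only [Set.mem_setOf_eq, Set.mem_insert_iff, Set.mem_singleton_iff]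
    constructor
    · intro h
      have h1 := h.1
      have h2 : j ≤ (P 2).length := occ_le (by decide) h
      have h3 : (P 2).length = 3 := by decide
      rw [h3] at h2
      interval_cases j <;> revert h <;> decide
    · rintro (rfl | rfl) <;> decide
  | succ k ih =>
    rw [show k + 1 + 1 = (k + 1) + 1 from rfl, P_succ (k + 1), P_succ (k + 2), show k + 2 = (k+1) + 1 from rfl]
    rw [master_set _ _ (false_mem_P k), ih]
    rw [show ({1, 2 ^ (k + 1) + 1} : Set ℕ) = insert 1 {2 ^ (k + 1) + 1} from rfl,
      Set.image_insert_eq, Set.image_singleton]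
    have : 2 ^ (k + 1 + 1) = 2 * 2 ^ (k + 1) := by rw [pow_succ]; ring
    norm_num [this]
    rw [show 2 * (2 ^ (k + 1) + 1) - 1 = 2 * 2 ^ (k + 1) + 1 by omega]

lemma claim2 (k : ℕ) : {j | OccursIn (P (k + 1)) (E (k + 1) 2) j} = {1, 2 ^ k + 1} := by
  induction k with
  | zero =>
    ext j
    simp only [Set.mem_setOf_eq, Set.mem_insert_iff, Set.mem_singleton_iff]
    constructor
    · intro h
      have h1 := h.1
      have h2 : j ≤ (E 1 2).length := occ_le (by decide) h
      have h3 : (E 1 2).length = 2 := by decide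
      rw [h3] at h2
      interval_cases j <;> revert h <;> decide
    · rintro (rfl | rfl) <;> decide
  | succ k ih =>
    rw [show k + 1 + 1 = (k + 1) + 1 from rfl, P_succ (k + 1), E_two_succ k]
    rw [master_set _ _ (false_mem_P k), ih]
    rw [show ({1, 2 ^ k + 1} : Set ℕ) = insert 1 {2 ^ k + 1} from rfl,
      Set.image_insert_eq, Set.image_singleton]
    have : 2 ^ (k + 1) = 2 * 2 ^ k := by rw [pow_succ]; ring
    norm_num [this]
    rw [show 2 * (2 ^ k + 1) - 1 = 2 * 2 ^ k + 1 by omega]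

lemma claim3 (k : ℕ) :
    {j | OccursIn (E (k + 1) 2) (P (k + 3)) j} = {2 ^ (k + 1) + 1, 3 * 2 ^ k + 1} := by
  induction k with
  | zero =>
    ext j
    simp only [Set.mem_setOf_eq, Set.mem_insert_iff, Set.mem_singleton_iff]
    constructor
    · intro h
      have h1 := h.1
      have h2 : j ≤ (P 3).length := occ_le (by decide) h
      have h3 : (P 3).length = 7 := by decide
      rw [h3] at h2
      interval_cases j <;> revert h <;> decide
    · rintro (rfl | rfl) <;> decide
  | succ k ih =>
    rw [E_two_succ k, show k + 1 + 3 = (k + 3) + 1 from rfl, P_succ (k + 3)]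
    rw [master_set _ _ (false_mem_E k), ih]
    rw [show ({2 ^ (k + 1) + 1, 3 * 2 ^ k + 1} : Set ℕ)
        = insert (2 ^ (k + 1) + 1) {3 * 2 ^ k + 1} from rfl,
      Set.image_insert_eq, Set.image_singleton]
    have h1 : 2 ^ (k + 1 + 1) = 2 * 2 ^ (k + 1) := by rw [pow_succ]; ring
    have h2 : 2 ^ (k + 1) = 2 * 2 ^ k := by rw [pow_succ]; ring
    norm_num [h1, h2]
    rw [show 2 * (2 * 2 ^ k + 1) - 1 = 2 * (2 * 2 ^ k) + 1 by omega,
      show 2 * (3 * 2 ^ k + 1) - 1 = 3 * (2 * 2 ^ k) + 1 by omega]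

lemma claim4 (k : ℕ) :
    {j | OccursIn (E (k + 1) 2) (E (k + 3) 2) j}
      = {2 ^ (k + 1) + 1, 3 * 2 ^ k + 1, 3 * 2 ^ (k + 1) + 1, 7 * 2 ^ k + 1} := by
  induction k with
  | zero =>
    ext j
    simp only [Set.mem_setOf_eq, Set.mem_insert_iff, Set.mem_singleton_iff]
    constructor
    · intro h
      have h1 := h.1
      have h2 : j ≤ (E 3 2).length := occ_le (by decide) h
      have h3 : (E 3 2).length = 11 := by decide
      rw [h3] at h2
      interval_cases j <;> revert h <;> decide
    · rintro (rfl | rfl | rfl | rfl) <;> decide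
  | succ k ih =>
    rw [show k + 1 + 1 = k + 2 from rfl, show k + 1 + 3 = (k + 2) + 2 from rfl,
      E_two_succ k, E_two_succ (k + 2), show k + 2 + 1 = k + 3 from rfl]
    rw [master_set _ _ (false_mem_E k), ih]
    rw [show ({2 ^ (k + 1) + 1, 3 * 2 ^ k + 1, 3 * 2 ^ (k + 1) + 1, 7 * 2 ^ k + 1} : Set ℕ)
        = insert (2 ^ (k + 1) + 1) (insert (3 * 2 ^ k + 1)
            (insert (3 * 2 ^ (k + 1) + 1) {7 * 2 ^ k + 1})) from rfl,
      Set.image_insert_eq, Set.image_insert_eq, Set.image_insert_eq, Set.image_singleton]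
    have h1 : 2 ^ (k + 1 + 1) = 2 * 2 ^ (k + 1) := by rw [pow_succ]; ring
    have h2 : 2 ^ (k + 1) = 2 * 2 ^ k := by rw [pow_succ]; ring
    norm_num [h1, h2]
    rw [show 2 * (2 * 2 ^ k + 1) - 1 = 2 * (2 * 2 ^ k) + 1 by omega,
      show 2 * (3 * 2 ^ k + 1) - 1 = 3 * (2 * 2 ^ k) + 1 by omega,
      show 2 * (3 * (2 * 2 ^ k) + 1) - 1 = 3 * (2 * (2 * 2 ^ k)) + 1 by omega,
      show 2 * (7 * 2 ^ k + 1) - 1 = 7 * (2 * 2 ^ k) + 1 by omega]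

end PD

/-- For every `m ≥ 1`: (1) `E m 1` occurs in `E (m+1) 1` at exactly the positions
`1` and `2^m+1`; (2) `E m 1` occurs in `E m 2` at exactly the positions `1` and
`2^(m-1)+1`; (3) `E m 2` occurs in `E (m+2) 1` at exactly the positions `2^m+1`
and `3·2^(m-1)+1`; (4) `E m 2` occurs in `E (m+2) 2` at exactly the positions
`2^m+1`, `3·2^(m-1)+1`, `3·2^m+1` and `7·2^(m-1)+1`. -/
theorem doubling_envelope_positions (m : ℕ) (hm : 1 ≤ m) :
    {j : ℕ | OccursIn (E m 1) (E (m + 1) 1) j} = {1, 2 ^ m + 1} ∧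
      {j : ℕ | OccursIn (E m 1) (E m 2) j} = {1, 2 ^ (m - 1) + 1} ∧
      {j : ℕ | OccursIn (E m 2) (E (m + 2) 1) j} = {2 ^ m + 1, 3 * 2 ^ (m - 1) + 1} ∧
      {j : ℕ | OccursIn (E m 2) (E (m + 2) 2) j}
        = {2 ^ m + 1, 3 * 2 ^ (m - 1) + 1, 3 * 2 ^ m + 1, 7 * 2 ^ (m - 1) + 1} := by
  obtain ⟨k, rfl⟩ : ∃ k, m = k + 1 := ⟨m - 1, by omega⟩
  refine ⟨?_, ?_, ?_, ?_⟩
  · rw [E_one, E_one, show k + 1 + 1 = k + 2 from rfl]; exact claim1 k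
  · rw [E_one, Nat.add_sub_cancel]; exact claim2 k
  · rw [E_one, Nat.add_sub_cancel, show k + 1 + 2 = k + 3 from rfl]; exact claim3 k
  · rw [Nat.add_sub_cancel, show k + 1 + 2 = k + 3 from rfl]; exact claim4 k
end
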